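/- Let A be an M×M matrix whose (i,j) entry is a monomial a_{ij} = ∏_{ℓ=1}^{L} (X_i^{[ℓ]})^{α_{ij}^{[ℓ]}} in jointly continuous random variables {X_i^{[ℓ]}}, with positive integer exponent vectors α_{ij} ∈ (ℤ⁺)^L. If for every row i and distinct columns j ≠ j' the exponent vectors α_{ij} ≠ α_{ij'} differ, and the variables X_i^{[ℓ]} are mutually independent with continuous distributions (variables in different rows independent), then A is invertible with probability 1. -/

import Mathlib

open MeasureTheory ProbabilityTheory

/-- Evaluation of a multivariate polynomial is measurable in the point. -/
lemma aux_meas_eval {σ : Type*} (p : MvPolynomial σ ℝ) :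
    Measurable fun x : σ → ℝ => MvPolynomial.eval x p := by
  induction p using MvPolynomial.induction_on with
  | C a => simpa using measurable_const
  | add p q hp hq => simp only [map_add]; exact hp.add hq
  | mul_X p n hp => simp only [map_mul, MvPolynomial.eval_X]; exact hp.mul (measurable_pi_apply n)

/-- A nonzero multivariate polynomial vanishes on a null set w.r.t. a product of
atomless probability measures on `ℝ` (index type `Fin n`). -/
lemma aux_pi_eval_ne_zero : ∀ (n : ℕ) (m : Fin n → Measure ℝ),
    (∀ i, IsProbabilityMeasure (m i)) → (∀ i (c : ℝ), m i {c} = 0) →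
    ∀ p : MvPolynomial (Fin n) ℝ, p ≠ 0 →
    Measure.pi m {x | MvPolynomial.eval x p = 0} = 0 := by
  intro n
  induction n with
  | zero =>
    intro m _ _ p hp
    obtain ⟨c, rfl⟩ := MvPolynomial.C_surjective (Fin 0) p
    have hc : c ≠ 0 := fun h => hp (by simp [h])
    have hset : {x : Fin 0 → ℝ | MvPolynomial.eval x (MvPolynomial.C c) = 0} = ∅ := by
      ext x; simp [hc]
    rw [hset, measure_empty]
  | succ n ih =>
    intro m hprob hatom p hp
    haveI : ∀ i, SigmaFinite (m i) := fun i => by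
      haveI := hprob i; infer_instance
    set q := MvPolynomial.finSuccEquiv ℝ n p with hqdef
    have hq0 : q ≠ 0 := fun h => hp <|
      (MvPolynomial.finSuccEquiv ℝ n).injective (by rw [map_zero, ← hqdef]; exact h)
    obtain ⟨k, hk⟩ : ∃ k, q.coeff k ≠ 0 :=
      ⟨q.natDegree, fun h => hq0
        (by rwa [← Polynomial.leadingCoeff, Polynomial.leadingCoeff_eq_zero] at h)⟩
    set ν : Measure (Fin n → ℝ) := Measure.pi fun j : Fin n => m j.succ with hν
    haveI : ∀ j : Fin n, SigmaFinite (m j.succ) := fun j => inferInstance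
    set S : Set (Fin (n + 1) → ℝ) := {x | MvPolynomial.eval x p = 0} with hS
    set T : Set (ℝ × (Fin n → ℝ)) :=
      {ys | MvPolynomial.eval (Fin.cons ys.1 ys.2 : Fin (n + 1) → ℝ) p = 0} with hT
    have hconsmeas : Measurable fun ys : ℝ × (Fin n → ℝ) =>
        (Fin.cons ys.1 ys.2 : Fin (n + 1) → ℝ) := by
      refine measurable_pi_lambda _ fun i => ?_
      refine Fin.cases ?_ ?_ i
      · simpa using measurable_fst
      · intro j; simp only [Fin.cons_succ]; exact (measurable_pi_apply j).comp measurable_snd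
    have hTm : MeasurableSet T :=
      ((aux_meas_eval p).comp hconsmeas) (measurableSet_singleton 0)
    have key := MeasureTheory.measurePreserving_piFinSuccAbove m 0
    have hpre : (MeasurableEquiv.piFinSuccAbove (fun _ : Fin (n + 1) => ℝ) 0) ⁻¹' T = S := by
      ext x
      have hx : (Fin.cons (x 0) (fun j => x ((0 : Fin (n + 1)).succAbove j))
          : Fin (n + 1) → ℝ) = x := by
        have : (fun j => x ((0 : Fin (n + 1)).succAbove j)) = Fin.tail x := by
          funext j; simp [Fin.tail, Fin.zero_succAbove]
        rw [this]; exact Fin.cons_self_tail x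
      simp only [Set.mem_preimage, MeasurableEquiv.piFinSuccAbove,
        MeasurableEquiv.coe_mk, Fin.insertNthEquiv_symm_apply, Fin.removeNth_zero,
        hT, hS, Set.mem_setOf_eq]
      show MvPolynomial.eval (Fin.cons (x 0) (fun j => x ((0 : Fin (n + 1)).succAbove j)) : Fin (n + 1) → ℝ) p = 0 ↔ _; rw [hx]
    have hmeasS : Measure.pi m S = ((m 0).prod ν) T := by
      rw [← hpre]
      have : (Measure.pi fun j : Fin n => m ((0 : Fin (n + 1)).succAbove j)) = ν := by
        rw [hν]; congr 1
      rw [← this]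
      exact key.measure_preimage hTm.nullMeasurableSet
    rw [hmeasS, Measure.prod_apply_symm hTm]
    have hbad : ν {s : Fin n → ℝ | MvPolynomial.eval s (q.coeff k) = 0} = 0 :=
      ih (fun j => m j.succ) (fun j => hprob _) (fun j c => hatom _ c) _ hk
    have hae : ∀ᵐ s ∂ν, MvPolynomial.eval s (q.coeff k) ≠ 0 := by
      rw [ae_iff]; simpa using hbad
    have hzero : ∀ᵐ s ∂ν, (m 0) ((fun y => (y, s)) ⁻¹' T) = 0 := by
      filter_upwards [hae] with s hs
      haveI : NullSingletonClass (m 0) := ⟨fun c => hatom 0 c⟩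
      have hr : (q.map (MvPolynomial.eval s) : Polynomial ℝ) ≠ 0 := fun h => hs <| by
        have := congrArg (fun r : Polynomial ℝ => r.coeff k) h
        simpa [Polynomial.coeff_map] using this
      have hfin : {y : ℝ | Polynomial.IsRoot (q.map (MvPolynomial.eval s)) y}.Finite :=
        Polynomial.finite_setOf_isRoot hr
      refine measure_mono_null ?_ (hfin.measure_zero (m 0))
      intro y hy
      have hy' : MvPolynomial.eval (Fin.cons y s : Fin (n + 1) → ℝ) p = 0 := hy
      rw [MvPolynomial.eval_eq_eval_mv_eval'] at hy'
      exact hy'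
    calc ∫⁻ s, (m 0) ((fun y => (y, s)) ⁻¹' T) ∂ν
        = ∫⁻ _, 0 ∂ν := lintegral_congr_ae hzero
      _ = 0 := lintegral_zero

/-- Version of `aux_pi_eval_ne_zero` for any finite index type. -/
lemma aux_pi_eval_ne_zero' {ι : Type*} [Fintype ι] (m : ι → Measure ℝ)
    (hprob : ∀ i, IsProbabilityMeasure (m i)) (hatom : ∀ i (c : ℝ), m i {c} = 0)
    (p : MvPolynomial ι ℝ) (hp : p ≠ 0) :
    Measure.pi m {x | MvPolynomial.eval x p = 0} = 0 := by
  classical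
  haveI : ∀ i, SigmaFinite (m i) := fun i => by haveI := hprob i; infer_instance
  set n := Fintype.card ι with hn
  set e : ι ≃ Fin n := Fintype.equivFin ι with he
  set g : (Fin n → ℝ) → (ι → ℝ) := fun x i => x (e i) with hg
  have hgm : Measurable g := measurable_pi_lambda _ fun i => measurable_pi_apply _
  haveI : ∀ j : Fin n, SigmaFinite (m (e.symm j)) := fun j => inferInstance
  have hmap : (Measure.pi fun j : Fin n => m (e.symm j)).map g = Measure.pi m := by
    refine (Measure.pi_eq fun s hs => ?_).symm
    rw [Measure.map_apply hgm (MeasurableSet.univ_pi hs)]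
    have hpre : g ⁻¹' Set.pi Set.univ s = Set.pi Set.univ fun j => s (e.symm j) := by
      ext x
      simp only [Set.mem_preimage, Set.mem_pi, Set.mem_univ, forall_true_left, hg]
      constructor
      · intro h j; simpa using h (e.symm j)
      · intro h i; simpa using h (e i)
    rw [hpre, Measure.pi_pi]
    exact Equiv.prod_comp e.symm fun i => m i (s i)
  have hZ : MeasurableSet {x : ι → ℝ | MvPolynomial.eval x p = 0} :=
    aux_meas_eval p (measurableSet_singleton 0)
  rw [← hmap, Measure.map_apply hgm hZ]
  have hren : MvPolynomial.rename (e : ι → Fin n) p ≠ 0 := fun h =>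
    hp (MvPolynomial.rename_injective _ e.injective (by simpa using h))
  have hset : g ⁻¹' {x : ι → ℝ | MvPolynomial.eval x p = 0}
      = {x : Fin n → ℝ | MvPolynomial.eval x (MvPolynomial.rename (e : ι → Fin n) p) = 0} := by
    ext x
    simp only [Set.mem_preimage, Set.mem_setOf_eq, MvPolynomial.eval_rename]
    rfl
  rw [hset]
  exact aux_pi_eval_ne_zero n _ (fun j => hprob _) (fun j c => hatom _ c) _ hren

theorem stmt17 (M L : ℕ)
    {Ω : Type*} [MeasurableSpace Ω] (μ : Measure Ω) [IsProbabilityMeasure μ]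
    (X : Fin M → Fin L → Ω → ℝ)
    (hmeas : ∀ i ℓ, Measurable (X i ℓ))
    -- the variables `X i ℓ` are mutually independent
    (hindep : iIndepFun
      (fun x : Fin M × Fin L => X x.1 x.2) μ)
    -- each variable has a continuous (atomless) distribution
    (hcont : ∀ (i : Fin M) (ℓ : Fin L) (c : ℝ), μ {ω | X i ℓ ω = c} = 0)
    (α : Fin M → Fin M → Fin L → ℕ)
    (hpos : ∀ i j ℓ, 0 < α i j ℓ)
    -- within each row, exponent vectors of distinct columns differ
    (hdist : ∀ (i : Fin M) (j j' : Fin M), j ≠ j' → α i j ≠ α i j') :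
    ∀ᵐ ω ∂μ,
      (Matrix.of fun i j : Fin M => ∏ ℓ : Fin L, X i ℓ ω ^ α i j ℓ).det ≠ 0 := by
  classical
  -- The exponent of the monomial in entry (i, j)
  set d : Fin M → Fin M → ((Fin M × Fin L) →₀ ℕ) :=
    fun i j => ∑ ℓ : Fin L, Finsupp.single (i, ℓ) (α i j ℓ) with hd
  -- The symbolic matrix and its determinant polynomial
  set Mat : Matrix (Fin M) (Fin M) (MvPolynomial (Fin M × Fin L) ℝ) :=
    Matrix.of fun i j => ∏ ℓ : Fin L, MvPolynomial.X (i, ℓ) ^ α i j ℓ with hMat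
  set P : MvPolynomial (Fin M × Fin L) ℝ := Mat.det with hP
  -- entries are monomials
  have hmono : ∀ i j, Mat i j = MvPolynomial.monomial (d i j) (1 : ℝ) := by
    intro i j
    rw [hMat, hd]
    simp only [Matrix.of_apply]
    rw [MvPolynomial.monomial_sum_index]
    simp [MvPolynomial.X_pow_eq_monomial]
  -- value of d at a point
  have hdval : ∀ i j i₀ ℓ, d i j (i₀, ℓ) = if i = i₀ then α i j ℓ else 0 := by
    intro i j i₀ ℓ
    rw [hd]
    rw [Finsupp.finset_sum_apply]
    by_cases h : i = i₀
    · subst h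
      rw [Finset.sum_eq_single ℓ]
      · simp [Finsupp.single_apply]
      · intro ℓ' _ hℓ'; simp [Finsupp.single_apply, Prod.ext_iff, hℓ']
      · simp
    · rw [if_neg h]
      refine Finset.sum_eq_zero fun ℓ' _ => ?_
      simp [Finsupp.single_apply, Prod.ext_iff, h]
  -- total exponent of a permutation's monomial
  set E : Equiv.Perm (Fin M) → ((Fin M × Fin L) →₀ ℕ) :=
    fun σ => ∑ i : Fin M, d (σ i) i with hE
  have hEval : ∀ (σ : Equiv.Perm (Fin M)) i₀ ℓ, E σ (i₀, ℓ) = α i₀ (σ⁻¹ i₀) ℓ := by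
    intro σ i₀ ℓ
    rw [hE]
    rw [Finsupp.finset_sum_apply]
    have hterm : ∀ i : Fin M, d (σ i) i (i₀, ℓ)
        = if i = σ⁻¹ i₀ then α i₀ (σ⁻¹ i₀) ℓ else 0 := by
      intro i
      rw [hdval]
      by_cases h : σ i = i₀
      · have hi : i = σ⁻¹ i₀ := by
          rw [← h]; simp
        rw [if_pos h, if_pos hi, h, hi]
      · have hi : i ≠ σ⁻¹ i₀ := fun hh => h (by rw [hh]; simp)
        rw [if_neg h, if_neg hi]
    simp_rw [hterm]
    simp
  have hEinj : Function.Injective E := by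
    intro σ τ h
    have hα : ∀ i₀, α i₀ (σ⁻¹ i₀) = α i₀ (τ⁻¹ i₀) := by
      intro i₀
      funext ℓ
      rw [← hEval σ i₀ ℓ, h, hEval τ i₀ ℓ]
    have hinv : σ⁻¹ = τ⁻¹ := Equiv.ext fun i₀ => by
      by_contra hne
      exact hdist i₀ _ _ hne (hα i₀)
    exact inv_injective hinv
  -- the determinant polynomial is nonzero
  have hcoeff : MvPolynomial.coeff (E 1) P = 1 := by
    rw [hP, Matrix.det_apply]
    have hprod : ∀ σ : Equiv.Perm (Fin M),
        (∏ i : Fin M, Mat (σ i) i) = MvPolynomial.monomial (E σ) (1 : ℝ) := by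
      intro σ
      simp_rw [hmono]
      rw [hE, MvPolynomial.monomial_sum_index]
      simp
    simp_rw [hprod]
    rw [MvPolynomial.coeff_sum]
    rw [Finset.sum_eq_single (1 : Equiv.Perm (Fin M))]
    · simp [MvPolynomial.coeff_monomial]
    · intro σ _ hσ
      rw [MvPolynomial.coeff_smul, MvPolynomial.coeff_monomial,
        if_neg (fun hh => hσ (hEinj hh)), smul_zero]
    · simp
  have hPne : P ≠ 0 := fun h => by simp [h] at hcoeff
  -- the joint law is a product measure
  set mι : Fin M × Fin L → Measure ℝ := fun x => μ.map (X x.1 x.2) with hmι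
  have hprobι : ∀ x, IsProbabilityMeasure (mι x) := fun x =>
    Measure.isProbabilityMeasure_map (hmeas x.1 x.2).aemeasurable
  have hatomι : ∀ x (c : ℝ), mι x {c} = 0 := by
    intro x c
    rw [hmι]
    rw [Measure.map_apply (hmeas x.1 x.2) (measurableSet_singleton c)]
    exact hcont x.1 x.2 c
  haveI : ∀ x, SigmaFinite (mι x) := fun x => by haveI := hprobι x; infer_instance
  set Y : Ω → (Fin M × Fin L → ℝ) := fun ω x => X x.1 x.2 ω with hY
  have hYm : Measurable Y := measurable_pi_lambda _ fun x => hmeas x.1 x.2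
  have hjoint : μ.map Y = Measure.pi mι := by
    refine (Measure.pi_eq fun s hs => ?_).symm
    rw [Measure.map_apply hYm (MeasurableSet.univ_pi hs)]
    have hpre : Y ⁻¹' Set.pi Set.univ s
        = ⋂ x ∈ (Finset.univ : Finset (Fin M × Fin L)), (fun ω => X x.1 x.2 ω) ⁻¹' s x := by
      ext ω
      simp [hY, Set.mem_pi]
    rw [hpre, hindep.measure_inter_preimage_eq_mul Finset.univ (fun x _ => hs x)]
    refine Finset.prod_congr rfl fun x _ => ?_
    rw [hmι, Measure.map_apply (hmeas x.1 x.2) (hs x)]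
  -- the zero set of P pulled back is null
  have hZ : MeasurableSet {v : Fin M × Fin L → ℝ | MvPolynomial.eval v P = 0} :=
    aux_meas_eval P (measurableSet_singleton 0)
  have hnull : μ {ω | MvPolynomial.eval (Y ω) P = 0} = 0 := by
    have hset : {ω | MvPolynomial.eval (Y ω) P = 0}
        = Y ⁻¹' {v | MvPolynomial.eval v P = 0} := rfl
    rw [hset, ← Measure.map_apply hYm hZ, hjoint]
    exact aux_pi_eval_ne_zero' mι hprobι hatomι P hPne
  -- evaluate the determinant
  have hdet : ∀ ω, (Matrix.of fun i j : Fin M => ∏ ℓ : Fin L, X i ℓ ω ^ α i j ℓ).det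
      = MvPolynomial.eval (Y ω) P := by
    intro ω
    rw [hP, RingHom.map_det]
    congr 1
    ext i j
    simp [hMat, hY, Matrix.map_apply, map_prod, map_pow, MvPolynomial.eval_X]
  have hae : ∀ᵐ ω ∂μ, MvPolynomial.eval (Y ω) P ≠ 0 := by
    rw [ae_iff]; simpa using hnull
  filter_upwards [hae] with ω hω
  rw [hdet ω]
  exact hω
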